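/- Let {Ψ_j}_{j∈J} ∪ {Φ} be n×n matrices forming a frame with upper bound B ≤ 1 in a (possibly weighted) norm ‖·‖: ∑_{j∈J} ‖Ψ_j x‖² + ‖Φx‖² ≤ ‖x‖² for all x. Let M be a nonexpansive map with M0 = 0 and define U[(j₁,...,j_m)]x = MΨ_{j_m}···MΨ_{j₁}x. Then for all m ≥ 1 and all x, ∑_{j∈J^m} ‖U[j]x‖² ≤ ‖x‖². -/
import Mathlib


/-- The scattering propagator built from a list of indices:
`scatU Ψ M [j₁, ..., j_m] x = M(Ψ_{j_m} ⋯ M(Ψ_{j₁} x))`. -/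
def scatU {E : Type*} [NormedAddCommGroup E] [NormedSpace ℝ E] {J : Type*}
    (Ψ : J → E →ₗ[ℝ] E) (M : E → E) : List J → E → E
  | [], x => x
  | j :: js, x => scatU Ψ M js (M (Ψ j x))

/-- with a nonexpansive frame (upper bound B ≤ 1) and a
nonexpansive pointwise map M with M0 = 0, for all m ≥ 1,
∑_{j ∈ J^m} ‖U[j]x‖² ≤ ‖x‖². -/
theorem scattering_nonexpansive {E : Type*} [NormedAddCommGroup E]
    [InnerProductSpace ℝ E] {J : Type*} [Fintype J]
    (Ψ : J → E →ₗ[ℝ] E) (Φ : E →ₗ[ℝ] E)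
    (hframe : ∀ x : E, (∑ j, ‖Ψ j x‖ ^ 2) + ‖Φ x‖ ^ 2 ≤ ‖x‖ ^ 2)
    (M : E → E) (hM : ∀ x, ‖M x‖ ≤ ‖x‖) (hM0 : M 0 = 0) :
    ∀ (m : ℕ), 1 ≤ m → ∀ x : E,
      ∑ j : Fin m → J, ‖scatU Ψ M (List.ofFn j) x‖ ^ 2 ≤ ‖x‖ ^ 2 := by
  have key : ∀ (m : ℕ) (x : E),
      ∑ j : Fin m → J, ‖scatU Ψ M (List.ofFn j) x‖ ^ 2 ≤ ‖x‖ ^ 2 := by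
    intro m
    induction m with
    | zero =>
      intro x
      simp [scatU]
    | succ m ih =>
      intro x
      have hsplit : ∑ j : Fin (m + 1) → J, ‖scatU Ψ M (List.ofFn j) x‖ ^ 2
          = ∑ j₀ : J, ∑ t : Fin m → J,
              ‖scatU Ψ M (List.ofFn t) (M (Ψ j₀ x))‖ ^ 2 := by
        rw [show (∑ j : Fin (m + 1) → J, ‖scatU Ψ M (List.ofFn j) x‖ ^ 2)
            = ∑ p : J × (Fin m → J),
                ‖scatU Ψ M (List.ofFn (Fin.cons p.1 p.2)) x‖ ^ 2 from
          (Fintype.sum_equiv (Fin.consEquiv fun _ => J) _ _ fun p => rfl).symm,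
          Fintype.sum_prod_type]
        refine Finset.sum_congr rfl fun j₀ _ => Finset.sum_congr rfl fun t _ => ?_
        simp [List.ofFn_succ, scatU, Function.comp]
      rw [hsplit]
      calc ∑ j₀ : J, ∑ t : Fin m → J, ‖scatU Ψ M (List.ofFn t) (M (Ψ j₀ x))‖ ^ 2
          ≤ ∑ j₀ : J, ‖M (Ψ j₀ x)‖ ^ 2 :=
            Finset.sum_le_sum fun j₀ _ => ih (M (Ψ j₀ x))
        _ ≤ ∑ j₀ : J, ‖Ψ j₀ x‖ ^ 2 :=
            Finset.sum_le_sum fun j₀ _ =>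
              pow_le_pow_left₀ (norm_nonneg _) (hM _) 2
        _ ≤ ‖x‖ ^ 2 :=
            le_trans (le_add_of_nonneg_right (by positivity)) (hframe x)
  exact fun m _ x => key m x
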